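/- Let G be a graph on n vertices that admits a total edge cover (an edge cover in which every connected component of the subgraph induced by the cover contains at least two edges). Then the maximum number of vertex-disjoint paths with two edges (P2's) in G plus the minimum size of a total edge cover of G equals n. -/

import Mathlib

open Finset

def P2Verts {V : Type*} [DecidableEq V] (p : V × V × V) : Finset V := {p.1, p.2.1, p.2.2}

def IsP2 {V : Type*} (G : SimpleGraph V) (p : V × V × V) : Prop :=
  G.Adj p.1 p.2.1 ∧ G.Adj p.2.1 p.2.2 ∧ p.1 ≠ p.2.2

def IsP2Packing {V : Type*} [DecidableEq V] (G : SimpleGraph V) (P : Finset (V × V × V)) : Prop :=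
  (∀ p ∈ P, IsP2 G p) ∧
  ∀ p ∈ P, ∀ q ∈ P, p ≠ q → Disjoint (P2Verts p) (P2Verts q)

def PackVerts {V : Type*} [DecidableEq V] (P : Finset (V × V × V)) : Finset V :=
  P.biUnion P2Verts

def IsMaximalP2Packing {V : Type*} [DecidableEq V] (G : SimpleGraph V)
    (P : Finset (V × V × V)) : Prop :=
  IsP2Packing G P ∧ ∀ q, IsP2 G q → ¬ Disjoint (P2Verts q) (PackVerts P)

def P2Edges {V : Type*} [DecidableEq V] (p : V × V × V) : Finset (Sym2 V) :=
  {s(p.1, p.2.1), s(p.2.1, p.2.2)}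

/-- EC is a total edge cover: edges of G covering every vertex, such that every
connected component of the spanning subgraph formed by EC has at least two edges. -/
def IsTotalEdgeCover {V : Type*} (G : SimpleGraph V) (EC : Finset (Sym2 V)) : Prop :=
  (EC : Set (Sym2 V)) ⊆ G.edgeSet ∧
  (∀ v : V, ∃ e ∈ EC, v ∈ e) ∧
  ∀ e ∈ EC, ∃ e' ∈ EC, e' ≠ e ∧ ∃ a ∈ e, ∃ b ∈ e',
    (SimpleGraph.fromEdgeSet (EC : Set (Sym2 V))).Reachable a b

section Aux

variable {V : Type*}

/-- Two distinct edges in the same reachability class yield a P2. -/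
lemma exists_p2_reachable {H : SimpleGraph V} {p q r s : V}
    (h1 : H.Adj p q) (h2 : H.Adj r s) (hne : s(p, q) ≠ s(r, s))
    (hre : H.Reachable p r) :
    ∃ t : V × V × V, IsP2 H t ∧ H.Reachable p t.1 := by
  classical
  by_cases hpr : p = r
  · subst hpr
    refine ⟨(q, p, s), ⟨h1.symm, h2, ?_⟩, h1.reachable⟩
    show q ≠ s
    rintro rfl; exact hne rfl
  by_cases hps : p = s
  · subst hps
    refine ⟨(q, p, r), ⟨h1.symm, h2.symm, ?_⟩, h1.reachable⟩
    show q ≠ r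
    rintro rfl; exact hne (Sym2.eq_swap)
  by_cases hqr : q = r
  · subst hqr
    refine ⟨(p, q, s), ⟨h1, h2, hps⟩, SimpleGraph.Reachable.refl p⟩
  by_cases hqs : q = s
  · subst hqs
    refine ⟨(p, q, r), ⟨h1, h2.symm, hpr⟩, SimpleGraph.Reachable.refl p⟩
  -- edges vertex-disjoint; take a path from q to r
  have hre' : H.Reachable q r := h1.symm.reachable.trans hre
  obtain ⟨w0⟩ := hre'
  obtain ⟨w, hw⟩ := w0.toPath
  clear hne
  cases w with
  | nil => exact absurd rfl hqr
  | cons h' rest =>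
    rename_i y
    cases rest with
    | nil =>
      -- h' : H.Adj q r
      exact ⟨(p, q, r), ⟨h1, h', hpr⟩, SimpleGraph.Reachable.refl p⟩
    | cons h'' rest2 =>
      rename_i z
      -- vertices q, y, z with q ≠ z
      have hnodup := hw.support_nodup
      rw [SimpleGraph.Walk.support_cons] at hnodup
      have hqz : q ≠ z := by
        intro hqzeq
        have : q ∈ (SimpleGraph.Walk.cons h'' rest2).support := by
          rw [SimpleGraph.Walk.support_cons]
          exact List.mem_cons_of_mem _ (hqzeq ▸ rest2.start_mem_support)
        exact (List.nodup_cons.mp hnodup).1 this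
      exact ⟨(q, y, z), ⟨h', h'', hqz⟩, h1.reachable⟩

end Aux

section LemA

variable {V : Type*} [Fintype V] [DecidableEq V]

lemma lemmaA (G : SimpleGraph V) {EC : Finset (Sym2 V)} (hEC : IsTotalEdgeCover G EC) :
    ∃ P' : Finset (V × V × V), IsP2Packing G P' ∧
      Fintype.card V ≤ P'.card + EC.card := by
  classical
  obtain ⟨hsub, hcov, htot⟩ := hEC
  set H := SimpleGraph.fromEdgeSet (EC : Set (Sym2 V)) with hH
  have hHG : H ≤ G := by
    rw [hH, ← SimpleGraph.fromEdgeSet_edgeSet (G := G)]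
    exact SimpleGraph.fromEdgeSet_mono hsub
  have hadj : ∀ v : V, ∃ u, H.Adj v u := by
    intro v
    obtain ⟨e, heEC, hve⟩ := hcov v
    induction e using Sym2.ind with
    | _ a b =>
      have hab : a ≠ b := ((SimpleGraph.mem_edgeSet _).mp (hsub (Finset.mem_coe.mpr heEC))).ne
      rcases Sym2.mem_iff.mp hve with rfl | rfl
      · exact ⟨b, (SimpleGraph.fromEdgeSet_adj _).mpr ⟨Finset.mem_coe.mpr heEC, hab⟩⟩
      · exact ⟨a, (SimpleGraph.fromEdgeSet_adj _).mpr
          ⟨Sym2.eq_swap ▸ Finset.mem_coe.mpr heEC, Ne.symm hab⟩⟩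
  -- from every vertex, a P2 is reachable
  have key : ∀ v : V, ∃ t : V × V × V, IsP2 H t ∧ H.Reachable v t.1 := by
    intro v
    obtain ⟨u, hu⟩ := hadj v
    have hmem : s(v, u) ∈ EC := Finset.mem_coe.mp ((SimpleGraph.fromEdgeSet_adj _).mp hu).1
    obtain ⟨e', he'EC, he'ne, a, ha, b, hb, hab⟩ := htot _ hmem
    induction e' using Sym2.ind with
    | _ r s' =>
    have hrs : r ≠ s' := ((SimpleGraph.mem_edgeSet _).mp (hsub (Finset.mem_coe.mpr he'EC))).ne
    have hadjrs : H.Adj r s' := (SimpleGraph.fromEdgeSet_adj _).mpr ⟨Finset.mem_coe.mpr he'EC, hrs⟩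
    have hva : H.Reachable v a := by
      rcases Sym2.mem_iff.mp ha with rfl | rfl
      · exact SimpleGraph.Reachable.refl _
      · exact hu.reachable
    have hbr : H.Reachable b r := by
      rcases Sym2.mem_iff.mp hb with rfl | rfl
      · exact SimpleGraph.Reachable.refl _
      · exact hadjrs.symm.reachable
    exact exists_p2_reachable hu hadjrs (fun h => he'ne h.symm)
      ((hva.trans hab).trans hbr)
  haveI : Fintype H.ConnectedComponent := Fintype.ofFinite _
  have hex : ∀ C : H.ConnectedComponent, ∃ t : V × V × V,
      IsP2 H t ∧ H.connectedComponentMk t.1 = C := by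
    intro C
    obtain ⟨t, ht, hr⟩ := key C.out
    refine ⟨t, ht, ?_⟩
    rw [← C.out_eq]
    exact SimpleGraph.ConnectedComponent.eq.mpr hr.symm
  choose g hg1 hg2 using hex
  -- all vertices of g C lie in component C
  have hgC : ∀ C : H.ConnectedComponent, ∀ x ∈ P2Verts (g C),
      H.connectedComponentMk x = C := by
    intro C x hx
    obtain ⟨h1, h2, _⟩ := hg1 C
    have hx' : x = (g C).1 ∨ x = (g C).2.1 ∨ x = (g C).2.2 := by
      simpa [P2Verts] using hx
    have e1 : H.connectedComponentMk (g C).2.1 = C :=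
      (SimpleGraph.ConnectedComponent.eq.mpr h1.symm.reachable).trans (hg2 C)
    have e2 : H.connectedComponentMk (g C).2.2 = C :=
      (SimpleGraph.ConnectedComponent.eq.mpr h2.symm.reachable).trans e1
    rcases hx' with rfl | rfl | rfl
    · exact hg2 C
    · exact e1
    · exact e2
  have hginj : Function.Injective g := by
    intro C C' hCC'
    have h1 : H.connectedComponentMk (g C).1 = C := hg2 C
    have h2 : H.connectedComponentMk (g C').1 = C' := hg2 C'
    rw [← h1, ← h2, hCC']
  set P' : Finset (V × V × V) := Finset.image g Finset.univ with hP'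
  have hcardP' : P'.card = Fintype.card H.ConnectedComponent := by
    rw [hP', Finset.card_image_of_injective _ hginj, Finset.card_univ]
  have hpack : IsP2Packing G P' := by
    constructor
    · intro p hp
      obtain ⟨C, _, rfl⟩ := Finset.mem_image.mp hp
      obtain ⟨h1, h2, h3⟩ := hg1 C
      exact ⟨hHG h1, hHG h2, h3⟩
    · intro p hp q hq hpq
      obtain ⟨C, _, rfl⟩ := Finset.mem_image.mp hp
      obtain ⟨C', _, rfl⟩ := Finset.mem_image.mp hq
      have hCC' : C ≠ C' := fun h => hpq (h ▸ rfl)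
      rw [Finset.disjoint_left]
      intro x hx hx'
      exact hCC' ((hgC C x hx).symm.trans (hgC C' x hx'))
  refine ⟨P', hpack, ?_⟩
  -- counting
  set rep : V → V := fun v => (H.connectedComponentMk v).out with hrepdef
  have hrep : ∀ v, H.Reachable v (rep v) := by
    intro v
    exact (SimpleGraph.ConnectedComponent.eq.mp ((H.connectedComponentMk v).out_eq)).symm
  have hrep_comp : ∀ v w, H.connectedComponentMk v = H.connectedComponentMk w →
      rep v = rep w := by
    intro v w hvw; simp only [hrepdef, hvw]
  -- R: representatives; T: the rest
  have hRcard : (Finset.univ.filter (fun v => rep v = v)).card ≤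
      Fintype.card H.ConnectedComponent := by
    rw [← Finset.card_univ]
    apply Finset.card_le_card_of_injOn (fun v => H.connectedComponentMk v)
      (fun _ _ => Finset.mem_univ _)
    intro v hv w hw hvw
    simp only [Finset.coe_filter, Set.mem_setOf_eq] at hv hw
    rw [← hv.2, ← hw.2]
    exact hrep_comp v w hvw
  -- neighbor towards representative
  have hT : ∀ v, rep v ≠ v → ∃ u, H.Adj v u ∧ H.dist u (rep u) + 1 = H.dist v (rep v) := by
    intro v hv
    obtain ⟨w, hwlen⟩ := (hrep v).exists_walk_length_eq_dist
    obtain ⟨u, hadj', rest, rfl⟩ := SimpleGraph.Walk.exists_eq_cons_of_ne (Ne.symm hv) w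
    have hru : rep u = rep v :=
      hrep_comp u v (SimpleGraph.ConnectedComponent.eq.mpr hadj'.symm.reachable)
    refine ⟨u, hadj', ?_⟩
    rw [SimpleGraph.Walk.length_cons] at hwlen
    have hle : H.dist u (rep v) ≤ rest.length := SimpleGraph.dist_le rest
    obtain ⟨w2, hw2⟩ := (hadj'.symm.reachable.trans (hrep v)).exists_walk_length_eq_dist
    have hge : H.dist v (rep v) ≤ H.dist u (rep v) + 1 := by
      have := SimpleGraph.dist_le (SimpleGraph.Walk.cons hadj' w2)
      rw [SimpleGraph.Walk.length_cons, hw2] at this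
      exact this
    rw [hru]
    omega
  have hT' : ∀ v, ∃ u, rep v ≠ v → H.Adj v u ∧ H.dist u (rep u) + 1 = H.dist v (rep v) := by
    intro v
    by_cases hv : rep v ≠ v
    · obtain ⟨u, h1, h2⟩ := hT v hv
      exact ⟨u, fun _ => ⟨h1, h2⟩⟩
    · exact ⟨v, fun h => absurd h hv⟩
  choose nbr hnbr using hT'
  have hTcard : (Finset.univ.filter (fun v => ¬ (rep v = v))).card ≤ EC.card := by
    apply Finset.card_le_card_of_injOn (fun v => s(v, nbr v))
    · intro v hv
      simp only [Finset.coe_filter, Finset.mem_filter, Set.mem_setOf_eq] at hv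
      exact Finset.mem_coe.mp ((SimpleGraph.fromEdgeSet_adj _).mp ((hnbr v hv.2).1)).1
    · intro v hv w hw hvw
      simp only [Finset.coe_filter, Set.mem_setOf_eq] at hv hw
      have hsv := hnbr v hv.2
      have hsw := hnbr w hw.2
      rcases Sym2.eq_iff.mp hvw with ⟨h1, _⟩ | ⟨h1, h2⟩
      · exact h1
      · exfalso
        have hd1 := hsv.2
        have hd2 := hsw.2
        rw [← h1] at hd2
        rw [h2] at hd1
        omega
  have hsplit := Finset.card_filter_add_card_filter_not
    (s := (Finset.univ : Finset V)) (p := fun v => rep v = v)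
  rw [Finset.card_univ] at hsplit
  omega

end LemA

section LemB

variable {V : Type*} [Fintype V] [DecidableEq V]

lemma card_P2Verts {G : SimpleGraph V} {p : V × V × V} (hp : IsP2 G p) :
    (P2Verts p).card = 3 := by
  obtain ⟨h1, h2, h3⟩ := hp
  have h12 : p.1 ≠ p.2.1 := h1.ne
  have h23 : p.2.1 ≠ p.2.2 := h2.ne
  rw [P2Verts, Finset.card_insert_of_notMem (by simp [h12, h3]),
    Finset.card_insert_of_notMem (by simp [h23]), Finset.card_singleton]

lemma lemmaB (G : SimpleGraph V) (h : ∃ EC0 : Finset (Sym2 V), IsTotalEdgeCover G EC0)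
    {P : Finset (V × V × V)} (hP : IsP2Packing G P)
    (hmax : ∀ q, IsP2 G q → ¬ Disjoint (P2Verts q) (PackVerts P)) :
    ∃ EC : Finset (Sym2 V), IsTotalEdgeCover G EC ∧ EC.card + P.card ≤ Fintype.card V := by
  classical
  obtain ⟨EC0, hsub0, hcov0, htot0⟩ := h
  set S := PackVerts P with hS
  have hdeg : ∀ v : V, ∃ u, G.Adj v u := by
    intro v
    obtain ⟨e, he, hve⟩ := hcov0 v
    induction e using Sym2.ind with
    | _ a b =>
      have hab : G.Adj a b := (SimpleGraph.mem_edgeSet _).mp (hsub0 (Finset.mem_coe.mpr he))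
      rcases Sym2.mem_iff.mp hve with rfl | rfl
      · exact ⟨b, hab⟩
      · exact ⟨a, hab.symm⟩
  -- degenerate two-vertex component is impossible
  have hdegen : ∀ v u : V, G.Adj v u → (∀ w, G.Adj v w → w = u) →
      (∀ w, G.Adj u w → w = v) → False := by
    intro v u hvu hNv hNu
    set H0 := SimpleGraph.fromEdgeSet (EC0 : Set (Sym2 V)) with hH0
    have hH0G : H0 ≤ G := by
      rw [hH0, ← SimpleGraph.fromEdgeSet_edgeSet (G := G)]
      exact SimpleGraph.fromEdgeSet_mono hsub0
    have hwalk : ∀ a x : V, (a = v ∨ a = u) → H0.Walk a x → (x = v ∨ x = u) := by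
      intro a x ha w
      induction w with
      | nil => exact ha
      | cons hadj rest ih =>
        apply ih
        rcases ha with rfl | rfl
        · right; exact hNv _ (hH0G hadj)
        · left; exact hNu _ (hH0G hadj)
    have hedge : ∀ e ∈ EC0, ∀ x ∈ e, (x = v ∨ x = u) → e = s(v, u) := by
      intro e he x hxe hx
      induction e using Sym2.ind with
      | _ a b =>
        have hab : G.Adj a b := (SimpleGraph.mem_edgeSet _).mp (hsub0 (Finset.mem_coe.mpr he))
        rcases Sym2.mem_iff.mp hxe with rfl | rfl
        · rcases hx with rfl | rfl
          · rw [hNv _ hab]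
          · rw [hNu _ hab, Sym2.eq_swap]
        · rcases hx with rfl | rfl
          · rw [hNv _ hab.symm, Sym2.eq_swap]
          · rw [hNu _ hab.symm]
    obtain ⟨e, he, hve⟩ := hcov0 v
    have hesvu : e = s(v, u) := hedge e he v hve (Or.inl rfl)
    subst hesvu
    obtain ⟨e', he', hne', a, ha, b, hb, hreach⟩ := htot0 _ he
    have hav : a = v ∨ a = u := by
      rcases Sym2.mem_iff.mp ha with rfl | rfl
      · exact Or.inl rfl
      · exact Or.inr rfl
    obtain ⟨w⟩ := hreach
    have hbv : b = v ∨ b = u := hwalk a b hav w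
    exact hne' (hedge e' he' b hb hbv)
  -- neighbor choice, preferring neighbors in S
  have hnbex : ∀ v, ∃ u, G.Adj v u ∧ ((∃ x, G.Adj v x ∧ x ∈ S) → u ∈ S) := by
    intro v
    by_cases hv : ∃ x, G.Adj v x ∧ x ∈ S
    · obtain ⟨x, h1, h2⟩ := hv; exact ⟨x, h1, fun _ => h2⟩
    · obtain ⟨u, hu⟩ := hdeg v; exact ⟨u, hu, fun hx => absurd hx hv⟩
  choose nb hnb1 hnb2 using hnbex
  have hC1 : ∀ v, v ∉ S → ¬(∃ x, G.Adj v x ∧ x ∈ S) →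
      (nb v ∉ S ∧ ∃ x, G.Adj (nb v) x ∧ x ∈ S) := by
    intro v hvS hvnoS
    have hnbv : G.Adj v (nb v) := hnb1 v
    have hnbvS : nb v ∉ S := fun hmem => hvnoS ⟨nb v, hnbv, hmem⟩
    refine ⟨hnbvS, ?_⟩
    by_contra hnoS2
    have hNv : ∀ w, G.Adj v w → w = nb v := by
      intro w hw
      by_contra hwu
      have hP2 : IsP2 G (w, v, nb v) := ⟨hw.symm, hnbv, hwu⟩
      apply hmax _ hP2
      rw [Finset.disjoint_left]
      intro x hx hxS
      have hx' : x = w ∨ x = v ∨ x = nb v := by simpa [P2Verts] using hx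
      rcases hx' with rfl | rfl | rfl
      · exact hvnoS ⟨x, hw, hxS⟩
      · exact hvS hxS
      · exact hnbvS hxS
    have hNu : ∀ w, G.Adj (nb v) w → w = v := by
      intro w hw
      by_contra hwv
      have hP2 : IsP2 G (v, nb v, w) := ⟨hnbv, hw, fun hh => hwv hh.symm⟩
      apply hmax _ hP2
      rw [Finset.disjoint_left]
      intro x hx hxS
      have hx' : x = v ∨ x = nb v ∨ x = w := by simpa [P2Verts] using hx
      rcases hx' with rfl | rfl | rfl
      · exact hvS hxS
      · exact hnbvS hxS
      · exact hnoS2 ⟨x, hw, hxS⟩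
    exact hdegen v (nb v) hnbv hNv hNu
  set O := Finset.univ \ S with hO
  set EC := (P.biUnion P2Edges) ∪ O.image (fun v => s(v, nb v)) with hEC
  -- cardinalities
  have hcard1 : (P.biUnion P2Edges).card ≤ 2 * P.card := by
    refine le_trans Finset.card_biUnion_le ?_
    calc ∑ p ∈ P, (P2Edges p).card ≤ ∑ _p ∈ P, 2 :=
          Finset.sum_le_sum (fun p _ => le_trans (Finset.card_insert_le _ _) (by simp [P2Edges]))
      _ = 2 * P.card := by rw [Finset.sum_const, smul_eq_mul, mul_comm]
  have hcardS : S.card = 3 * P.card := by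
    rw [hS, PackVerts, Finset.card_biUnion hP.2]
    rw [Finset.sum_congr rfl (fun p hp => card_P2Verts (hP.1 p hp))]
    simp [mul_comm]
  have hcardO : O.card + S.card = Fintype.card V := by
    rw [hO, Finset.card_sdiff_of_subset (Finset.subset_univ S), Finset.card_univ]
    have := Finset.card_le_card (Finset.subset_univ S)
    rw [Finset.card_univ] at this
    omega
  have hcardEC : EC.card ≤ 2 * P.card + O.card :=
    le_trans (Finset.card_union_le _ _) (by
      have := Finset.card_image_le (s := O) (f := fun v => s(v, nb v))
      omega)
  refine ⟨EC, ⟨?_, ?_, ?_⟩, by omega⟩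
  · -- edges of G
    intro e he
    rcases Finset.mem_union.mp (Finset.mem_coe.mp he) with h1 | h1
    · obtain ⟨p, hp, hep⟩ := Finset.mem_biUnion.mp h1
      obtain ⟨ha1, ha2, _⟩ := hP.1 p hp
      rcases Finset.mem_insert.mp hep with rfl | hep
      · exact (SimpleGraph.mem_edgeSet _).mpr ha1
      · rw [Finset.mem_singleton.mp hep]
        exact (SimpleGraph.mem_edgeSet _).mpr ha2
    · obtain ⟨v, _, rfl⟩ := Finset.mem_image.mp h1
      exact (SimpleGraph.mem_edgeSet _).mpr (hnb1 v)
  · -- coverage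
    intro v
    by_cases hv : v ∈ S
    · obtain ⟨p, hp, hvp⟩ := Finset.mem_biUnion.mp hv
      have hv' : v = p.1 ∨ v = p.2.1 ∨ v = p.2.2 := by simpa [P2Verts] using hvp
      rcases hv' with rfl | rfl | rfl
      · exact ⟨s(p.1, p.2.1), Finset.mem_union_left _
          (Finset.mem_biUnion.mpr ⟨p, hp, Finset.mem_insert_self _ _⟩),
          Sym2.mem_iff.mpr (Or.inl rfl)⟩
      · exact ⟨s(p.1, p.2.1), Finset.mem_union_left _
          (Finset.mem_biUnion.mpr ⟨p, hp, Finset.mem_insert_self _ _⟩),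
          Sym2.mem_iff.mpr (Or.inr rfl)⟩
      · exact ⟨s(p.2.1, p.2.2), Finset.mem_union_left _
          (Finset.mem_biUnion.mpr ⟨p, hp,
            Finset.mem_insert_of_mem (Finset.mem_singleton_self _)⟩),
          Sym2.mem_iff.mpr (Or.inr rfl)⟩
    · have hvO : v ∈ O := Finset.mem_sdiff.mpr ⟨Finset.mem_univ _, hv⟩
      exact ⟨s(v, nb v), Finset.mem_union_right _ (Finset.mem_image_of_mem _ hvO),
        Sym2.mem_iff.mpr (Or.inl rfl)⟩
  · -- totality
    intro e he
    have hSsub : ∀ p ∈ P, ∀ x ∈ P2Verts p, x ∈ S := by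
      intro p hp x hx
      exact Finset.mem_biUnion.mpr ⟨p, hp, hx⟩
    rcases Finset.mem_union.mp he with h1 | h1
    · obtain ⟨p, hp, hep⟩ := Finset.mem_biUnion.mp h1
      obtain ⟨ha1, ha2, ha3⟩ := hP.1 p hp
      have hE12 : s(p.1, p.2.1) ≠ s(p.2.1, p.2.2) := by
        intro hcontra
        rcases Sym2.eq_iff.mp hcontra with ⟨h1', _⟩ | ⟨h1', _⟩
        · exact ha1.ne h1'
        · exact ha3 h1'
      rcases Finset.mem_insert.mp hep with rfl | hep
      · refine ⟨s(p.2.1, p.2.2), Finset.mem_union_left _ (Finset.mem_biUnion.mpr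
          ⟨p, hp, Finset.mem_insert_of_mem (Finset.mem_singleton_self _)⟩),
          Ne.symm hE12, p.2.1, Sym2.mem_iff.mpr (Or.inr rfl),
          p.2.1, Sym2.mem_iff.mpr (Or.inl rfl), SimpleGraph.Reachable.refl _⟩
      · rw [Finset.mem_singleton.mp hep]
        refine ⟨s(p.1, p.2.1), Finset.mem_union_left _ (Finset.mem_biUnion.mpr
          ⟨p, hp, Finset.mem_insert_self _ _⟩),
          hE12, p.2.1, Sym2.mem_iff.mpr (Or.inl rfl),
          p.2.1, Sym2.mem_iff.mpr (Or.inr rfl), SimpleGraph.Reachable.refl _⟩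
    · obtain ⟨v, hvO, rfl⟩ := Finset.mem_image.mp h1
      have hvS : v ∉ S := (Finset.mem_sdiff.mp hvO).2
      by_cases hv : ∃ x, G.Adj v x ∧ x ∈ S
      · have hnbS : nb v ∈ S := hnb2 v hv
        obtain ⟨p, hp, hvp⟩ := Finset.mem_biUnion.mp hnbS
        have hv' : nb v = p.1 ∨ nb v = p.2.1 ∨ nb v = p.2.2 := by simpa [P2Verts] using hvp
        have hvert : ∀ x ∈ ({p.1, p.2.1, p.2.2} : Finset V), x ∈ S := by
          intro x hx
          exact hSsub p hp x (by simpa [P2Verts] using hx)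
        rcases hv' with hvv | hvv | hvv
        · refine ⟨s(p.1, p.2.1), Finset.mem_union_left _ (Finset.mem_biUnion.mpr
            ⟨p, hp, Finset.mem_insert_self _ _⟩), ?_, nb v,
            Sym2.mem_iff.mpr (Or.inr rfl), nb v, Sym2.mem_iff.mpr (Or.inl hvv),
            SimpleGraph.Reachable.refl _⟩
          intro hcontra
          have : v ∈ s(p.1, p.2.1) := hcontra ▸ Sym2.mem_iff.mpr (Or.inl rfl)
          rcases Sym2.mem_iff.mp this with h' | h'
          · exact hvS (h' ▸ hvert p.1 (by simp))
          · exact hvS (h' ▸ hvert p.2.1 (by simp))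
        · refine ⟨s(p.1, p.2.1), Finset.mem_union_left _ (Finset.mem_biUnion.mpr
            ⟨p, hp, Finset.mem_insert_self _ _⟩), ?_, nb v,
            Sym2.mem_iff.mpr (Or.inr rfl), nb v, Sym2.mem_iff.mpr (Or.inr hvv),
            SimpleGraph.Reachable.refl _⟩
          intro hcontra
          have : v ∈ s(p.1, p.2.1) := hcontra ▸ Sym2.mem_iff.mpr (Or.inl rfl)
          rcases Sym2.mem_iff.mp this with h' | h'
          · exact hvS (h' ▸ hvert p.1 (by simp))
          · exact hvS (h' ▸ hvert p.2.1 (by simp))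
        · refine ⟨s(p.2.1, p.2.2), Finset.mem_union_left _ (Finset.mem_biUnion.mpr
            ⟨p, hp, Finset.mem_insert_of_mem (Finset.mem_singleton_self _)⟩), ?_, nb v,
            Sym2.mem_iff.mpr (Or.inr rfl), nb v, Sym2.mem_iff.mpr (Or.inr hvv),
            SimpleGraph.Reachable.refl _⟩
          intro hcontra
          have : v ∈ s(p.2.1, p.2.2) := hcontra ▸ Sym2.mem_iff.mpr (Or.inl rfl)
          rcases Sym2.mem_iff.mp this with h' | h'
          · exact hvS (h' ▸ hvert p.2.1 (by simp))
          · exact hvS (h' ▸ hvert p.2.2 (by simp))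
      · obtain ⟨hnbvS, hxS⟩ := hC1 v hvS hv
        have huO : nb v ∈ O := Finset.mem_sdiff.mpr ⟨Finset.mem_univ _, hnbvS⟩
        have hnbnbS : nb (nb v) ∈ S := hnb2 _ hxS
        refine ⟨s(nb v, nb (nb v)), Finset.mem_union_right _
          (Finset.mem_image_of_mem _ huO), ?_, nb v,
          Sym2.mem_iff.mpr (Or.inr rfl), nb v, Sym2.mem_iff.mpr (Or.inl rfl),
          SimpleGraph.Reachable.refl _⟩
        intro hcontra
        rcases Sym2.eq_iff.mp hcontra with ⟨h1', _⟩ | ⟨_, h2'⟩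
        · exact (hnb1 v).ne' h1'
        · exact hvS (h2' ▸ hnbnbS)

end LemB

/-- Gallai-type identity: maximum P2-packing size plus minimum total edge cover size = n. -/
theorem stmt0 {V : Type*} [Fintype V] [DecidableEq V] (G : SimpleGraph V)
    (h : ∃ EC : Finset (Sym2 V), IsTotalEdgeCover G EC) :
    ∃ (P : Finset (V × V × V)) (EC : Finset (Sym2 V)),
      IsP2Packing G P ∧ IsTotalEdgeCover G EC ∧
      (∀ P' : Finset (V × V × V), IsP2Packing G P' → P'.card ≤ P.card) ∧
      (∀ EC' : Finset (Sym2 V), IsTotalEdgeCover G EC' → EC.card ≤ EC'.card) ∧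
      P.card + EC.card = Fintype.card V := by
  classical
  have hne : ((Finset.univ : Finset (Finset (V × V × V))).filter
      (fun P => IsP2Packing G P)).Nonempty := by
    refine ⟨∅, Finset.mem_filter.mpr ⟨Finset.mem_univ _, ?_, ?_⟩⟩
    · intro p hp; exact absurd hp (Finset.notMem_empty p)
    · intro p hp; exact absurd hp (Finset.notMem_empty p)
  obtain ⟨P, hPmem, hPmax⟩ := Finset.exists_max_image _ (fun P => P.card) hne
  have hP : IsP2Packing G P := (Finset.mem_filter.mp hPmem).2
  have hPbig : ∀ P' : Finset (V × V × V), IsP2Packing G P' → P'.card ≤ P.card :=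
    fun P' h' => hPmax P' (Finset.mem_filter.mpr ⟨Finset.mem_univ _, h'⟩)
  have hmax : ∀ q, IsP2 G q → ¬ Disjoint (P2Verts q) (PackVerts P) := by
    intro q hq hdisj
    have hqP : q ∉ P := by
      intro hqP
      have hsubq : P2Verts q ⊆ PackVerts P := Finset.subset_biUnion_of_mem _ hqP
      have hempty : P2Verts q = ∅ := by
        have := disjoint_self.mp (hdisj.mono_right hsubq)
        simpa using this
      have : q.1 ∈ P2Verts q := by simp [P2Verts]
      rw [hempty] at this
      exact absurd this (Finset.notMem_empty _)
    have hins : IsP2Packing G (insert q P) := by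
      constructor
      · intro p hp
        rcases Finset.mem_insert.mp hp with rfl | hp
        exacts [hq, hP.1 p hp]
      · intro p hp r hr hpr
        have hsub : ∀ x ∈ P, P2Verts x ⊆ PackVerts P :=
          fun x hx => Finset.subset_biUnion_of_mem _ hx
        rcases Finset.mem_insert.mp hp with hpq | hpP
        · rcases Finset.mem_insert.mp hr with hrq | hrP
          · exact absurd (hpq.trans hrq.symm) hpr
          · subst hpq; exact hdisj.mono_right (hsub r hrP)
        · rcases Finset.mem_insert.mp hr with hrq | hrP
          · subst hrq; exact (hdisj.mono_right (hsub p hpP)).symm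
          · exact hP.2 p hpP r hrP hpr
    have := hPbig _ hins
    rw [Finset.card_insert_of_notMem hqP] at this
    omega
  obtain ⟨EC, hEC, hECcard⟩ := lemmaB G h hP hmax
  obtain ⟨P1, hP1, hcard1⟩ := lemmaA G hEC
  have h1 : P1.card ≤ P.card := hPbig _ hP1
  refine ⟨P, EC, hP, hEC, hPbig, ?_, by omega⟩
  intro EC' hEC'
  obtain ⟨P2, hP2, hcard2⟩ := lemmaA G hEC'
  have := hPbig _ hP2
  omega
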